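/- Let f : ℝ^d → ℝ be differentiable and strictly convex, let S ⊆ ℝ^d, let x ∈ S, and suppose y ∈ S satisfies ⟨∇f(x), y⟩ ≥ ⟨∇f(x), z⟩ for all z ∈ S. If f(y) = f(x), then y = x, and moreover ⟨∇f(x), z − x⟩ ≤ 0 for all z ∈ S; that is, x is a fixed point of the iteration and a stationary point of f over S. -/

import Mathlib

open RealInnerProductSpace

/-- first claim of Theorem 1: if `f` is differentiable and strictly
convex, `y ∈ S` maximizes `z ↦ ⟪∇f(x), z⟫` over `S`, and `f(y) = f(x)`, then `y = x`
and `x` is a stationary point of `f` over `S`, i.e. `⟪∇f(x), z − x⟫ ≤ 0` for all `z ∈ S`. -/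
theorem fixed_point_of_no_increase (d : ℕ)
    (f : EuclideanSpace ℝ (Fin d) → ℝ)
    (hdiff : Differentiable ℝ f) (hconv : StrictConvexOn ℝ Set.univ f)
    (S : Set (EuclideanSpace ℝ (Fin d)))
    (x : EuclideanSpace ℝ (Fin d)) (hx : x ∈ S)
    (y : EuclideanSpace ℝ (Fin d)) (hy : y ∈ S)
    (hmax : ∀ z ∈ S, ⟪gradient f x, z⟫ ≤ ⟪gradient f x, y⟫) :
    f y = f x → y = x ∧ ∀ z ∈ S, ⟪gradient f x, z - x⟫ ≤ 0 := by
  intro hfy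
  have hyx : y = x := by
    by_contra hne
    set v := y - x with hv
    have hv0 : v ≠ 0 := sub_ne_zero.mpr hne
    -- the function g(t) = f(x + t • v) is strictly convex on ℝ
    set g : ℝ → ℝ := fun t => f (x + t • v) with hg
    have hgconv : StrictConvexOn ℝ Set.univ g := by
      refine ⟨convex_univ, ?_⟩
      intro s _ t _ hst a b ha hb hab
      have hpts : x + s • v ≠ x + t • v := by
        intro h
        apply hst
        have := add_left_cancel h
        have : (s - t) • v = 0 := by rw [sub_smul, this, sub_self]
        rcases smul_eq_zero.mp this with h' | h'
        · linarith [sub_eq_zero.mp (by exact_mod_cast h')]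
        · exact absurd h' hv0
      have key := hconv.2 (Set.mem_univ (x + s • v)) (Set.mem_univ (x + t • v)) hpts ha hb hab
      have heq : a • (x + s • v) + b • (x + t • v) = (a + b) • x + (a * s + b * t) • v := by
        module
      rw [hab, one_smul] at heq
      rw [heq] at key
      simpa [hg, smul_eq_mul] using key
    -- derivative of g at 0 is ⟪∇f(x), v⟫
    have hline : HasDerivAt (fun t : ℝ => x + t • v) v 0 := by
      simpa using ((hasDerivAt_id (0:ℝ)).smul_const v).const_add x
    have hgrad : HasGradientAt f (gradient f x) x := (hdiff x).hasGradientAt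
    have hfderiv : HasFDerivAt f ((InnerProductSpace.toDual ℝ _) (gradient f x)) x := hgrad
    have hgderiv : HasDerivAt g (⟪gradient f x, v⟫) 0 := by
      have h0 : x + (0:ℝ) • v = x := by simp
      have := HasFDerivAt.comp_hasDerivAt 0 (h0 ▸ hfderiv) hline
      simpa [hg, InnerProductSpace.toDual_apply_apply, Function.comp_def] using this
    -- strict convexity: g'(0) < slope g 0 1 = f y - f x = 0
    have hlt := hgconv.lt_slope_of_hasDerivAt (Set.mem_univ (0:ℝ)) (Set.mem_univ (1:ℝ))
      zero_lt_one hgderiv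
    have hg0 : g 0 = f x := by simp [hg]
    have hg1 : g 1 = f y := by simp [hg, hv]
    rw [slope_def_field, hg0, hg1, hfy, sub_self, zero_div] at hlt
    -- but g'(0) ≥ 0 by maximality
    have hnn : (0:ℝ) ≤ ⟪gradient f x, v⟫ := by
      have := hmax x hx
      rw [hv, inner_sub_right]
      linarith
    linarith
  refine ⟨hyx, fun z hz => ?_⟩
  have := hmax z hz
  rw [hyx] at this
  rw [inner_sub_right]
  linarith
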